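/- arXiv:quant-ph/0604161 — 2 statements merged into one kernel-verified Lean document; each statement's English description precedes it below -/
import Mathlib

section
/- Let E be a finite group with E' ⊆ Z(E) (the commutator subgroup is central), let H be a subgroup of E, and let χ be an irreducible complex character of H such that Z(E) ∩ ker χ = {1}. Then the support of χ (the set of h ∈ H with χ(h) ≠ 0) equals the center Z(H). -/
open CategoryTheory in
/-- An irreducible complex rep sends central elements to scalars. -/
lemma aux_central_scalar {G : Type} [Group G] (V : FDRep ℂ G) [Simple V]
    (z : G) (hz : z ∈ Subgroup.center G) : ∃ c : ℂ, V.ρ z = c • (1 : V →ₗ[ℂ] V) := by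
  let f : V ⟶ V := ⟨FGModuleCat.ofHom (V.ρ z), by
    intro g; ext v
    show V.ρ z (V.ρ g v) = V.ρ g (V.ρ z v)
    rw [← Module.End.mul_apply, ← map_mul, hz.comm g, map_mul, Module.End.mul_apply]⟩
  obtain ⟨c, hc⟩ := endomorphism_simple_eq_smul_id ℂ f
  refine ⟨c, ?_⟩
  have h1 := congrArg Action.Hom.hom hc
  ext v
  have h2 := congrArg (fun (φ : V.V ⟶ V.V) => φ v) h1
  simp [f] at h2
  exact h2.symm

open CategoryTheory in
lemma aux_finrank_ne {G : Type} [Group G] (V : FDRep ℂ G) [Simple V] :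
    Module.finrank ℂ V ≠ 0 := by
  intro h
  haveI hs : Subsingleton V := (Module.finrank_zero_iff (R := ℂ) (M := V)).mp h
  haveI : Subsingleton ((forget (FGModuleCat ℂ)).obj V.V) := hs
  apply id_nonzero V
  ext v
  exact Subsingleton.elim _ _

open CategoryTheory in
lemma aux_char_smul {G : Type} [Group G] (V : FDRep ℂ G) [Simple V]
    (z : G) (hz : z ∈ Subgroup.center G) :
    ∃ c : ℂ, c ≠ 0 ∧ ∀ w : G, V.character (z * w) = c * V.character w := by
  obtain ⟨c, hρ⟩ := aux_central_scalar V z hz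
  haveI : Nontrivial V := Module.nontrivial_of_finrank_pos
    (Nat.pos_of_ne_zero (aux_finrank_ne V))
  refine ⟨c, ?_, ?_⟩
  · intro hc0
    have h1 : (1 : V →ₗ[ℂ] V) = V.ρ z * V.ρ z⁻¹ := by
      rw [← map_mul, mul_inv_cancel, map_one]
    rw [hρ, hc0, zero_smul, zero_mul] at h1
    obtain ⟨v, hv⟩ := exists_ne (0 : V)
    apply hv
    have := congrArg (fun (φ : V →ₗ[ℂ] V) => φ v) h1
    simpa using this
  · intro w
    show LinearMap.trace ℂ V (V.ρ (z * w)) = c * LinearMap.trace ℂ V (V.ρ w)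
    rw [map_mul, hρ, smul_mul_assoc, one_mul, map_smul, smul_eq_mul]

/-- If `E' ⊆ Z(E)`, `H ≤ E`, and `χ` is an irreducible complex character of `H`
with `Z(E) ∩ ker χ = 1`, then `supp χ = Z(H)`. -/
theorem stmt1 {E : Type} [Group E] [Fintype E]
    (hE : commutator E ≤ Subgroup.center E)
    (H : Subgroup E) (V : FDRep ℂ ↥H) (hV : CategoryTheory.Simple V)
    (hker : ∀ h : H, (h : E) ∈ Subgroup.center E → V.character h = V.character 1 → h = 1) :
    {h : H | V.character h ≠ 0} = (Subgroup.center ↥H : Set ↥H) := by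
  ext h
  simp only [Set.mem_setOf_eq, SetLike.mem_coe]
  constructor
  · intro hne
    rw [Subgroup.mem_center_iff]
    intro k
    set z : H := h⁻¹ * k⁻¹ * h * k with hzdef
    have hzE : (z : E) ∈ Subgroup.center E := by
      apply hE
      open scoped commutatorElement in
      have : (z : E) = ⁅(h : E)⁻¹, (k : E)⁻¹⁆ := by
        simp [hzdef, commutatorElement_def]
      rw [this]
      exact Subgroup.commutator_mem_commutator (Subgroup.mem_top _) (Subgroup.mem_top _)
    have hzH : z ∈ Subgroup.center H := by
      rw [Subgroup.mem_center_iff]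
      intro g
      exact Subtype.ext (by push_cast; exact (hzE.comm (g:E)).symm)
    obtain ⟨c, hc0, hmul⟩ := aux_char_smul V z hzH
    have e1 : V.character h = c * V.character h := by
      have e2 : V.character (k⁻¹ * h * k⁻¹⁻¹) = V.character h := FDRep.char_conj V h k⁻¹
      rw [inv_inv] at e2
      have e3 : k⁻¹ * h * k = h * z := by rw [hzdef]; group
      rw [e3, FDRep.char_mul_comm V z h, hmul h] at e2
      exact e2.symm
    have hc1 : c = 1 := by
      have h4 : c * V.character h = 1 * V.character h := by rw [one_mul, ← e1]
      exact mul_right_cancel₀ hne h4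
    have hchar : V.character z = V.character 1 := by
      have := hmul 1
      rwa [mul_one, hc1, one_mul] at this
    have hz1 : z = 1 := hker z hzE hchar
    calc k * h = k * h * z := by rw [hz1, mul_one]
      _ = h * k := by rw [hzdef]; group
  · intro hc
    obtain ⟨c, hc0, hmul⟩ := aux_char_smul V h hc
    have := hmul 1
    rw [mul_one, FDRep.char_one] at this
    rw [this]
    exact mul_ne_zero hc0 (Nat.cast_ne_zero.mpr (aux_finrank_ne V))
end

section
/- Let E be a finite group with E' ⊆ Z(E), let φ be a faithful irreducible character of E with φ(1) = |E : Z(E)|^{1/2}, and let T be a subgroup with Z(E) ≤ T. If ϑ is an irreducible character of T with ⟨φ|_T, ϑ⟩_T > 0, then supp(ϑ) = Z(T). -/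
open CategoryTheory
open scoped commutatorElement

lemma central_smul {G : Type} [Monoid G] (V : FDRep ℂ G) (hV : Simple V)
    (z : G) (hz : ∀ g : G, z * g = g * z) :
    ∃ c : ℂ, ∀ v : V, V.ρ z v = c • v := by
  let f : V ⟶ V := ⟨FGModuleCat.ofHom (V.ρ z), ?_⟩
  · obtain ⟨c, hc⟩ := endomorphism_simple_eq_smul_id ℂ f
    refine ⟨c, fun v => ?_⟩
    have := congrArg (fun (g : V ⟶ V) => g.hom v) hc
    have h2 := this.symm
    simp [f] at h2
    exact h2.trans rfl
  · intro g
    ext v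
    change V.ρ z (V.ρ g v) = V.ρ g (V.ρ z v)
    rw [← Module.End.mul_apply, ← Module.End.mul_apply, ← map_mul, ← map_mul, hz]

lemma char_central {G : Type} [Monoid G] (V : FDRep ℂ G) (z : G) (c : ℂ)
    (hc : ∀ v : V, V.ρ z v = c • v) (g : G) : V.character (z * g) = c * V.character g := by
  have : V.ρ (z * g) = c • V.ρ g := by
    ext v
    simp [map_mul, Module.End.mul_apply, hc]
  unfold FDRep.character
  rw [this, map_smul, smul_eq_mul]

lemma simple_nontrivial {G : Type} [Monoid G] (V : FDRep ℂ G) (hV : Simple V) :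
    Nontrivial V := by
  by_contra h
  have hs : Subsingleton V := not_nontrivial_iff_subsingleton.mp h
  refine (CategoryTheory.id_nonzero V) ?_
  ext v
  exact hs.elim _ _

lemma inv_scalar {G : Type} [Group G] (V : FDRep ℂ G) (hV : Simple V) (z : G) (c : ℂ)
    (hc : ∀ v : V, V.ρ z v = c • v) : c ≠ 0 ∧ ∀ v : V, V.ρ z⁻¹ v = c⁻¹ • v := by
  have hnt := simple_nontrivial V hV
  obtain ⟨v0, hv0⟩ := exists_ne (0 : V)
  have hid : ∀ v : V, V.ρ z (V.ρ z⁻¹ v) = v := fun v => by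
    rw [← Module.End.mul_apply, ← map_mul, mul_inv_cancel, map_one, Module.End.one_apply]
  have hc0 : c ≠ 0 := by
    intro h
    have h1 : V.ρ z⁻¹ (V.ρ z v0) = v0 := by
      rw [← Module.End.mul_apply, ← map_mul, inv_mul_cancel, map_one, Module.End.one_apply]
    rw [hc v0, h, zero_smul, map_zero] at h1
    exact hv0 h1.symm
  refine ⟨hc0, fun v => ?_⟩
  have h2 := hid v
  rw [hc] at h2
  conv_rhs => rw [← h2]
  rw [smul_smul, inv_mul_cancel₀ hc0, one_smul]

/-- If `E' ⊆ Z(E)`, `φ` is a faithful irreducible character of `E` with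
`φ(1) = |E : Z(E)|^{1/2}`, `Z(E) ≤ T ≤ E`, and `ϑ ∈ Irr(T)` with `⟨φ|_T, ϑ⟩_T > 0`,
then `supp ϑ = Z(T)`. -/
theorem stmt3 {E : Type} [Group E] [Fintype E]
    (hE : commutator E ≤ Subgroup.center E)
    (V : FDRep ℂ E) (hV : CategoryTheory.Simple V)
    (hfaith : ∀ g : E, V.character g = V.character 1 → g = 1)
    (hdeg : V.character 1 ^ 2 = ((Subgroup.center E).index : ℂ))
    (T : Subgroup E) (hT : Subgroup.center E ≤ T)
    (W : FDRep ℂ ↥T) (hW : CategoryTheory.Simple W)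
    (hpos : 0 < ((1 / (Nat.card T : ℂ)) *
      ∑ᶠ t : T, V.character (t : E) * W.character t⁻¹).re) :
    {t : T | W.character t ≠ 0} = (Subgroup.center ↥T : Set ↥T) := by
  classical
  haveI : Fintype ↥T := Fintype.ofFinite _
  set S : ℂ := ∑ᶠ t : T, V.character (t : E) * W.character t⁻¹ with hSdef
  have hS : S ≠ 0 := by
    intro h
    rw [h, mul_zero] at hpos
    exact lt_irrefl 0 hpos
  -- scalar of V at a central element is 1 iff the element is 1
  have hfaith' : ∀ (z : E) (c : ℂ), (∀ v : V, V.ρ z v = c • v) → c = 1 → z = 1 := by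
    intro z c hc h1
    apply hfaith
    have := char_central V z c hc 1
    rw [mul_one, h1, one_mul] at this
    exact this
  -- matching of scalars
  have hmatch : ∀ (z : E) (hz : z ∈ Subgroup.center E) (cV cW : ℂ),
      (∀ v : V, V.ρ z v = cV • v) → (∀ w : W, W.ρ ⟨z, hT hz⟩ w = cW • w) → cW = cV := by
    intro z hz cV cW hcV hcW
    set z' : ↥T := ⟨z, hT hz⟩ with hz'def
    obtain ⟨hcW0, hcWinv⟩ := inv_scalar W hW z' cW hcW
    have hzc : ∀ g : E, g * z = z * g := fun g => (Subgroup.mem_center_iff.mp hz g)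
    have hre : S = ∑ᶠ t : T, V.character ((t * z' : T) : E) * W.character (t * z')⁻¹ := by
      rw [hSdef, finsum_eq_sum_of_fintype, finsum_eq_sum_of_fintype]
      exact (Fintype.sum_equiv (Equiv.mulRight z')
        (fun t => V.character ((t * z' : T) : E) * W.character (t * z')⁻¹)
        (fun t => V.character (t : E) * W.character t⁻¹) (fun t => rfl)).symm
    have hterm : ∀ t : T, V.character ((t * z' : T) : E) * W.character (t * z')⁻¹
        = (cV * cW⁻¹) * (V.character (t : E) * W.character t⁻¹) := by
      intro t
      have h1 : ((t * z' : T) : E) = z * (t : E) := by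
        push_cast
        rw [← hzc (t : E)]
      have h2 : (t * z')⁻¹ = z'⁻¹ * t⁻¹ := by rw [mul_inv_rev]
      rw [h1, h2, char_central V z cV hcV, char_central W z'⁻¹ cW⁻¹ hcWinv]
      ring
    have hSS : S = (cV * cW⁻¹) * S := by
      calc S = ∑ᶠ t : T, V.character ((t * z' : T) : E) * W.character (t * z')⁻¹ := hre
        _ = ∑ᶠ t : T, (cV * cW⁻¹) * (V.character (t : E) * W.character t⁻¹) :=
            finsum_congr hterm
        _ = (cV * cW⁻¹) * S := by
            rw [hSdef, finsum_eq_sum_of_fintype, finsum_eq_sum_of_fintype, Finset.mul_sum]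
    have h1 : cV * cW⁻¹ = 1 := by
      have h0 : (cV * cW⁻¹ - 1) * S = 0 := by linear_combination -hSS
      rcases mul_eq_zero.mp h0 with h | h
      · exact sub_eq_zero.mp h
      · exact absurd h hS
    field_simp at h1
    exact h1.symm
  ext t
  simp only [Set.mem_setOf_eq, SetLike.mem_coe]
  constructor
  · intro ht
    rw [Subgroup.mem_center_iff]
    intro s
    set z : E := ⁅((t : E))⁻¹, (s : E)⁆ with hzdef
    have hzE : z ∈ Subgroup.center E := hE (by
      rw [commutator_def]
      exact Subgroup.commutator_mem_commutator (Subgroup.mem_top _) (Subgroup.mem_top _))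
    set z' : ↥T := t⁻¹ * s * t * s⁻¹ with hz'def
    have hz'c : (z' : E) = z := by
      rw [hz'def, hzdef, commutatorElement_def]
      push_cast
      group
    have hz'e : z' = (⟨z, hT hzE⟩ : ↥T) := Subtype.ext hz'c
    obtain ⟨cV, hcV⟩ := central_smul V hV z
      (fun g => (Subgroup.mem_center_iff.mp hzE g).symm)
    obtain ⟨cW, hcW⟩ := central_smul W hW z' (fun u => by
      apply Subtype.ext
      push_cast [hz'c]
      exact (Subgroup.mem_center_iff.mp hzE (u : E)).symm)
    have hcWz : ∀ w : W, W.ρ (⟨z, hT hzE⟩ : ↥T) w = cW • w := by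
      rw [← hz'e]; exact hcW
    have hmc : cW = cV := hmatch z hzE cV cW hcV hcWz
    have hconj : W.character (t * z') = W.character t := by
      rw [show t * z' = s * t * s⁻¹ by rw [hz'def]; group]
      exact FDRep.char_conj W t s
    have hcc : W.character (t * z') = cW * W.character t := by
      rw [FDRep.char_mul_comm W z' t]
      exact char_central W z' cW hcW t
    have hcW1 : cW = 1 := by
      have h0 : (cW - 1) * W.character t = 0 := by
        rw [hconj] at hcc
        linear_combination -hcc
      rcases mul_eq_zero.mp h0 with h | h
      · exact sub_eq_zero.mp h
      · exact absurd h ht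
    have hz1 : z = 1 := hfaith' z cV hcV (by rw [← hmc, hcW1])
    have hz'1 : z' = 1 := Subtype.ext (by rw [hz'c, hz1]; rfl)
    have hst : s * t = t * z' * s := by rw [hz'def]; group
    rw [hst, hz'1, mul_one]
  · intro ht
    obtain ⟨c, hc⟩ := central_smul W hW t
      (fun u => (Subgroup.mem_center_iff.mp ht u).symm)
    obtain ⟨hc0, -⟩ := inv_scalar W hW t c hc
    haveI := simple_nontrivial W hW
    have h1 : W.character t = c * W.character 1 := by
      have := char_central W t c hc 1
      rwa [mul_one] at this
    rw [h1, FDRep.char_one]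
    exact mul_ne_zero hc0 (Nat.cast_ne_zero.mpr Module.finrank_pos.ne')
end
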